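/- arXiv:1406.0237 — 3 statements merged into one kernel-verified Lean document; each statement's English description precedes it below -/
import Mathlib

section
/- Let A, B, C be finite abelian p-groups with B a subgroup of C. Suppose B is a proper subgroup of C, B and C have the same minimal number of generators (rank), and, writing the cyclic decompositions B ≅ ∏ C_{p^{β_j}} and C ≅ ∏ C_{p^{γ_j}} with invariants in decreasing order, the exponent of A divides p^{β_r}, where r is the largest index with β_r < γ_r. Then Hom(A,B) = Hom(A,C), i.e., every homomorphism from A to C has image contained in B. -/
/-- The subgroup of `MulAut G` of automorphisms `α` with `x⁻¹ * α x ∈ X` for all `x`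
(automorphisms centralizing `G/X`). -/
def autCentMod {G : Type*} [Group G] (X : Subgroup G) : Subgroup (MulAut G) where
  carrier := {α | ∀ x : G, x⁻¹ * α x ∈ X}
  one_mem' := by intro x; simpa using X.one_mem
  mul_mem' := by
    intro α β hα hβ x
    have h := X.mul_mem (hβ x) (hα (β x))
    simpa [mul_assoc] using h
  inv_mem' := by
    intro α hα x
    have h := X.inv_mem (hα (α⁻¹ x))
    simpa [MulAut.apply_inv_self, mul_inv_rev] using h

/-- The subgroup of `MulAut G` of automorphisms fixing `Y` pointwise. -/
def autFix {G : Type*} [Group G] (Y : Subgroup G) : Subgroup (MulAut G) where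
  carrier := {α | ∀ y ∈ Y, α y = y}
  one_mem' := by intro y _; rfl
  mul_mem' := by
    intro α β hα hβ y hy
    have : (α * β) y = α (β y) := rfl
    rw [this, hβ y hy, hα y hy]
  inv_mem' := by
    intro α hα y hy
    have := hα y hy
    calc α⁻¹ y = α⁻¹ (α y) := by rw [this]
    _ = y := by simp

/-- A group is purely non-abelian if it has no nontrivial abelian (internal) direct factor. -/
def IsPurelyNonabelian (G : Type*) [Group G] : Prop :=
  ¬ ∃ H K : Subgroup G, H ≠ ⊥ ∧ H ≤ Subgroup.center G ∧ K.Normal ∧ IsCompl H K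

/-- `X` has invariant-factor decomposition `p^(e 0) ≥ p^(e 1) ≥ …`. -/
def HasDecomp (p : ℕ) (X : Type*) [Group X] {m : ℕ} (e : Fin m → ℕ) : Prop :=
  Antitone e ∧ (∀ j, 0 < e j) ∧
    Nonempty (X ≃* ((j : Fin m) → Multiplicative (ZMod (p ^ e j))))

/-- `n ≤ var(X, Y)`, where `var(X,Y) = p^(β r)` and `r` is the largest index at which the
invariant factor exponents `β` of `X` and `γ` of `Y` differ. -/
def varLe (p : ℕ) (X Y : Type*) [Group X] [Group Y] (n : ℕ) : Prop :=
  ∀ (m : ℕ) (β γ : Fin m → ℕ), HasDecomp p X β → HasDecomp p Y γ →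
    ∀ r : Fin m, β r < γ r → (∀ j, r < j → β j = γ j) → n ≤ p ^ β r

/-- `n = var(X, Y)`. -/
def varEq (p : ℕ) (X Y : Type*) [Group X] [Group Y] (n : ℕ) : Prop :=
  ∀ (m : ℕ) (β γ : Fin m → ℕ), HasDecomp p X β → HasDecomp p Y γ →
    ∀ r : Fin m, β r < γ r → (∀ j, r < j → β j = γ j) → n = p ^ β r

/-- A central subgroup is commutative. -/
def centralCommGroup {G : Type*} [Group G] {X : Subgroup G}
    (hX : X ≤ Subgroup.center G) : CommGroup ↥X :=
  { (inferInstance : Group ↥X) with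
    mul_comm := fun a b => Subtype.ext (Subgroup.mem_center_iff.mp (hX b.2) a.1) }

lemma card_nsmul_zero_zmod (M n : ℕ) (hM : M ≠ 0) :
    Nat.card {x : ZMod M // (n : ZMod M) * x = 0} = Nat.gcd M n := by
  haveI : NeZero M := ⟨hM⟩
  set ψ : ZMod M →+ ZMod M := AddMonoidHom.mulLeft (n : ZMod M) with hψ
  have hker : Nat.card {x : ZMod M // (n : ZMod M) * x = 0} = Nat.card ψ.ker := by
    apply Nat.card_congr
    exact Equiv.subtypeEquivRight fun x => by
      simp [hψ, AddMonoidHom.mem_ker]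
  have hrange : ψ.range = AddSubgroup.zmultiples ((n : ℕ) : ZMod M) := by
    apply le_antisymm
    · rintro _ ⟨x, rfl⟩
      rw [AddSubgroup.mem_zmultiples_iff]
      refine ⟨(x.val : ℤ), ?_⟩
      rw [zsmul_eq_mul]
      push_cast
      rw [ZMod.natCast_val, ZMod.cast_id, mul_comm]
      rfl
    · rw [AddSubgroup.zmultiples_le]
      exact ⟨1, by simp [hψ]⟩
  have h1 : Nat.card (ZMod M) = Nat.card (ZMod M ⧸ ψ.ker) * Nat.card ψ.ker :=
    AddSubgroup.card_eq_card_quotient_mul_card_addSubgroup ψ.ker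
  have h2 : Nat.card (ZMod M ⧸ ψ.ker) = Nat.card ψ.range :=
    Nat.card_congr (QuotientAddGroup.quotientKerEquivRange ψ).toEquiv
  have h3 : Nat.card ψ.range = M / Nat.gcd M n := by
    rw [hrange, Nat.card_zmultiples, ZMod.addOrderOf_coe n hM]
  have hg : Nat.gcd M n ∣ M := Nat.gcd_dvd_left M n
  have hgpos : 0 < Nat.gcd M n := Nat.gcd_pos_of_pos_left n (Nat.pos_of_ne_zero hM)
  have hdivpos : 0 < M / Nat.gcd M n := Nat.div_pos (Nat.le_of_dvd (Nat.pos_of_ne_zero hM) hg) hgpos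
  rw [hker]
  have := h1
  rw [h2, h3, Nat.card_zmod] at this
  have hme : M = (M / Nat.gcd M n) * Nat.gcd M n := (Nat.div_mul_cancel hg).symm
  exact (Nat.eq_of_mul_eq_mul_left hdivpos (by rw [← hme]; exact this)).symm

lemma card_pow_eq_one_zmod (M n : ℕ) (hM : M ≠ 0) :
    Nat.card {x : Multiplicative (ZMod M) // x ^ n = 1} = Nat.gcd M n := by
  rw [← card_nsmul_zero_zmod M n hM]
  apply Nat.card_congr
  refine Equiv.subtypeEquiv Multiplicative.toAdd fun x => ?_
  rw [← nsmul_eq_mul, ← toAdd_pow]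
  exact ⟨fun h => by rw [h]; rfl, fun h => Multiplicative.toAdd.injective (by simpa using h)⟩

lemma card_pow_eq_one_pi {m : ℕ} (G : Fin m → Type*) [∀ j, Group (G j)] (n : ℕ) :
    Nat.card {x : (j : Fin m) → G j // x ^ n = 1} = ∏ j, Nat.card {y : G j // y ^ n = 1} := by
  rw [← Nat.card_pi]
  apply Nat.card_congr
  exact (Equiv.subtypeEquivRight fun x => by simp [funext_iff]).trans (Equiv.subtypePiEquivPi)

lemma card_pow_eq_one_congr {G H : Type*} [Group G] [Group H] (e : G ≃* H) (n : ℕ) :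
    Nat.card {x : G // x ^ n = 1} = Nat.card {x : H // x ^ n = 1} :=
  Nat.card_congr (Equiv.subtypeEquiv e.toEquiv fun x => by
    show x ^ n = 1 ↔ e x ^ n = 1
    rw [← map_pow]
    exact (MulEquiv.map_eq_one_iff e).symm)

/-- Lemma 2.2(i), sufficiency: if `B < C`, `d(B) = d(C)` and `exp(A)` divides
`var(B, C) = p^(β r)`, then `Hom(A, B) = Hom(A, C)`, i.e. every homomorphism
from `A` to `C` has image contained in `B`. -/
theorem hom_eq_of_varLe {p : ℕ} (hp : p.Prime) {A C : Type*}
    [CommGroup A] [Fintype A] [CommGroup C] [Fintype C]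
    (hA : IsPGroup p A) (hC : IsPGroup p C)
    (B : Subgroup C) (hBC : B ≠ ⊤)
    (hrank : Group.rank ↥B = Group.rank C)
    {m : ℕ} (β γ : Fin m → ℕ)
    (hβ : Antitone β) (hβ0 : ∀ j, 0 < β j)
    (hγ : Antitone γ) (hγ0 : ∀ j, 0 < γ j)
    (eB : ↥B ≃* ((j : Fin m) → Multiplicative (ZMod (p ^ β j))))
    (eC : C ≃* ((j : Fin m) → Multiplicative (ZMod (p ^ γ j))))
    (r : Fin m) (hr : β r < γ r) (hr' : ∀ j, r < j → β j = γ j)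
    (hexp : Monoid.exponent A ∣ p ^ β r) :
    ∀ (f : A →* C) (a : A), f a ∈ B := by
  intro f a
  set n := p ^ β r with hn
  have hpn : p ≠ 0 := hp.pos.ne'
  have han : a ^ n = 1 := by
    obtain ⟨c, hc⟩ := hexp
    rw [hc, pow_mul, Monoid.pow_exponent_eq_one, one_pow]
  have hfa : (f a) ^ n = 1 := by rw [← map_pow, han, map_one]
  have e1 : {x : C // x ∈ B ∧ x ^ n = 1} ≃ {b : ↥B // b ^ n = 1} :=
    { toFun := fun x => ⟨⟨x.1, x.2.1⟩, by
        apply Subtype.ext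
        simpa using x.2.2⟩
      invFun := fun b => ⟨b.1.1, b.1.2, by simpa [Subtype.ext_iff] using b.2⟩
      left_inv := fun x => rfl
      right_inv := fun b => rfl }
  have hBcard : Nat.card {x : C // x ∈ B ∧ x ^ n = 1} = ∏ j, Nat.gcd (p ^ β j) n := by
    rw [Nat.card_congr e1, card_pow_eq_one_congr eB n, card_pow_eq_one_pi]
    exact Finset.prod_congr rfl fun j _ => card_pow_eq_one_zmod _ _ (pow_ne_zero _ hpn)
  have hCcard : Nat.card {x : C // x ^ n = 1} = ∏ j, Nat.gcd (p ^ γ j) n := by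
    rw [card_pow_eq_one_congr eC n, card_pow_eq_one_pi]
    exact Finset.prod_congr rfl fun j _ => card_pow_eq_one_zmod _ _ (pow_ne_zero _ hpn)
  have hprod : ∀ j, Nat.gcd (p ^ β j) n = Nat.gcd (p ^ γ j) n := by
    intro j
    rcases le_or_gt j r with hj | hj
    · have h1 : β r ≤ β j := hβ hj
      have h2 : β r ≤ γ j := le_trans hr.le (hγ hj)
      rw [hn, Nat.gcd_eq_right (pow_dvd_pow p h1), Nat.gcd_eq_right (pow_dvd_pow p h2)]
    · rw [hr' j hj]
  have hsub : {x : C | x ∈ B ∧ x ^ n = 1} ⊆ {x : C | x ^ n = 1} := fun x hx => hx.2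
  have hle : ({x : C | x ^ n = 1}).ncard ≤ ({x : C | x ∈ B ∧ x ^ n = 1}).ncard := by
    rw [← Nat.card_coe_set_eq, ← Nat.card_coe_set_eq]
    have h1 : Nat.card ↥{x : C | x ∈ B ∧ x ^ n = 1} = ∏ j, Nat.gcd (p ^ β j) n := hBcard
    have h2 : Nat.card ↥{x : C | x ^ n = 1} = ∏ j, Nat.gcd (p ^ γ j) n := hCcard
    rw [h1, h2]
    exact le_of_eq (Finset.prod_congr rfl fun j _ => (hprod j).symm)
  have heq := Set.eq_of_subset_of_ncard_le hsub hle (Set.toFinite _)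
  have hmem : f a ∈ {x : C | x ∈ B ∧ x ^ n = 1} := heq ▸ hfa
  exact hmem.1
end

section
/- Let G be a finite p-group of nilpotence class 2. Then IA(G) = IA(G)* (every IA-automorphism of G fixes the center pointwise) if and only if either G' = Z(G), or d(G/Z(G)) = d(G/G') and exp(G') ≤ var(G/Z(G), G/G'). -/
set_option linter.unusedSectionVars false
set_option linter.unusedVariables false
set_option maxHeartbeats 1000000

namespace IAAux

open Subgroup

/-- Subgroup of `n`-th powers. -/
def pw (n : ℕ) (X : Type*) [CommGroup X] : Subgroup X := (powMonoidHom n : X →* X).range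

lemma mem_pw {X : Type*} [CommGroup X] {n : ℕ} {x : X} : x ∈ pw n X ↔ ∃ y : X, y ^ n = x :=
  Iff.rfl

lemma pw_le_pw {X : Type*} [CommGroup X] {a b : ℕ} (h : a ∣ b) : pw b X ≤ pw a X := by
  rintro x ⟨y, rfl⟩
  obtain ⟨t, rfl⟩ := h
  exact ⟨y ^ t, by simp only [powMonoidHom_apply, ← pow_mul, mul_comm t a]⟩

lemma one_mem_pw {X : Type*} [CommGroup X] (n : ℕ) : (1 : X) ∈ pw n X := Subgroup.one_mem _

/-- divisibility lemma -/
lemma nat_dvd_aux {p : ℕ} (hp : p.Prime) (e k v : ℕ) :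
    p ^ e ∣ p ^ k * v ↔ p ^ (e - min e k) ∣ v := by
  rcases le_total e k with h | h
  · simp only [min_eq_left h, Nat.sub_self, pow_zero, one_dvd, iff_true]
    exact dvd_mul_of_dvd_left (pow_dvd_pow p h) v
  · rw [min_eq_right h]
    have : p ^ e = p ^ k * p ^ (e - k) := by rw [← pow_add]; congr 1; omega
    rw [this, Nat.mul_dvd_mul_iff_left (pow_pos hp.pos k)]

lemma nat_dvd_aux2 {p : ℕ} (hp : p.Prime) (c d v : ℕ) (hd : d ≤ c) :
    p ^ c ∣ v * p ^ (c - d) ↔ p ^ d ∣ v := by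
  have : p ^ c = p ^ d * p ^ (c - d) := by rw [← pow_add]; congr 1; omega
  rw [this, mul_comm (p ^ d), mul_comm v]
  exact Nat.mul_dvd_mul_iff_left (pow_pos hp.pos (c - d))

/-- membership in power-subgroup for `ZMod (p^e)` additively -/
lemma zmod_exists_nsmul_iff {p : ℕ} (hp : p.Prime) (e c : ℕ) (v : ZMod (p ^ e)) :
    (∃ w : ZMod (p ^ e), p ^ c • w = v) ↔ p ^ min e c ∣ v.val := by
  haveI : NeZero (p ^ e) := ⟨(pow_pos hp.pos e).ne'⟩
  constructor
  · rintro ⟨w, rfl⟩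
    have hv : p ^ c • w = ((p ^ c * w.val : ℕ) : ZMod (p ^ e)) := by
      rw [nsmul_eq_mul, Nat.cast_mul, ZMod.natCast_val, ZMod.cast_id]
    rw [hv, ZMod.val_natCast]
    have h1 : p ^ min e c ∣ p ^ e := pow_dvd_pow p (min_le_left e c)
    rw [Nat.dvd_mod_iff h1]
    exact dvd_mul_of_dvd_left (pow_dvd_pow p (min_le_right e c)) _
  · intro hdvd
    rcases le_total c e with h | h
    · rw [min_eq_right h] at hdvd
      obtain ⟨s, hs⟩ := hdvd
      refine ⟨(s : ZMod (p ^ e)), ?_⟩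
      have : (v.val : ZMod (p ^ e)) = v := ZMod.natCast_rightInverse v
      rw [← this, hs, nsmul_eq_mul, Nat.cast_mul]
    · rw [min_eq_left h] at hdvd
      have hv0 : v.val = 0 := Nat.eq_zero_of_dvd_of_lt hdvd (ZMod.val_lt v)
      have : v = 0 := by
        have := ZMod.natCast_rightInverse (n := p ^ e) v
        rw [← this, hv0, Nat.cast_zero]
      exact ⟨0, by rw [this, smul_zero]⟩

/-- cardinality of the `p^k`-torsion in `ZMod (p^e)` -/
lemma card_torsion_zmod {p : ℕ} (hp : p.Prime) (e k : ℕ) :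
    Nat.card {x : ZMod (p ^ e) // p ^ k • x = 0} = p ^ min e k := by
  haveI : NeZero (p ^ e) := ⟨(pow_pos hp.pos e).ne'⟩
  set g : ZMod (p ^ e) := ((p ^ (e - min e k) : ℕ) : ZMod (p ^ e)) with hg
  have key : ∀ x : ZMod (p ^ e), p ^ k • x = 0 ↔ x ∈ AddSubgroup.zmultiples g := by
    intro x
    constructor
    · intro hx
      have hx' : ((p ^ k * x.val : ℕ) : ZMod (p ^ e)) = 0 := by
        rw [Nat.cast_mul, ZMod.natCast_val, ZMod.cast_id, ← nsmul_eq_mul]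
        exact hx
      rw [ZMod.natCast_eq_zero_iff, nat_dvd_aux hp] at hx'
      obtain ⟨s, hs⟩ := hx'
      have hx2 : x = s • g := by
        have h1 : (x.val : ZMod (p ^ e)) = x := ZMod.natCast_rightInverse x
        rw [← h1, hs, hg, nsmul_eq_mul, mul_comm, Nat.cast_mul]
      rw [hx2]
      exact AddSubgroup.nsmul_mem _ (AddSubgroup.mem_zmultiples g) s
    · intro hx
      obtain ⟨t, rfl⟩ := AddSubgroup.mem_zmultiples_iff.mp hx
      have hgz : p ^ k • g = 0 := by
        rw [hg, nsmul_eq_mul, ← Nat.cast_mul, ZMod.natCast_eq_zero_iff]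
        have : e ≤ k + (e - min e k) := by omega
        calc p ^ e ∣ p ^ (k + (e - min e k)) := pow_dvd_pow p this
        _ = p ^ k * p ^ (e - min e k) := pow_add p _ _
      rw [smul_comm, hgz, smul_zero]
  have hcongr : Nat.card {x : ZMod (p ^ e) // p ^ k • x = 0}
      = Nat.card (AddSubgroup.zmultiples g) :=
    Nat.card_congr (Equiv.subtypeEquivRight key)
  rw [hcongr, Nat.card_zmultiples, hg, ZMod.addOrderOf_coe _ (NeZero.ne _)]
  have h1 : p ^ (e - min e k) ∣ p ^ e := pow_dvd_pow p (by omega)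
  rw [Nat.gcd_eq_right h1, Nat.pow_div (by omega) hp.pos]
  congr 1
  omega

lemma card_torsion_of_decomp {p : ℕ} (hp : p.Prime) {X : Type*} [CommGroup X]
    {m : ℕ} {e : Fin m → ℕ} (hd : HasDecomp p X e) (k : ℕ) :
    Nat.card {x : X // x ^ p ^ k = 1} = p ^ (∑ j, min (e j) k) := by
  obtain ⟨-, -, ⟨ι⟩⟩ := hd
  have h1 : Nat.card {x : X // x ^ p ^ k = 1}
      = Nat.card {y : (j : Fin m) → Multiplicative (ZMod (p ^ e j)) // y ^ p ^ k = 1} := by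
    refine Nat.card_congr (Equiv.subtypeEquiv ι.toEquiv (fun x => ?_))
    show x ^ p ^ k = 1 ↔ ι x ^ p ^ k = 1
    rw [← map_pow]
    exact ⟨fun h => by rw [h, map_one], fun h => by
      simpa using congrArg ι.symm h⟩
  have h2 : Nat.card {y : (j : Fin m) → Multiplicative (ZMod (p ^ e j)) // y ^ p ^ k = 1}
      = ∏ j, Nat.card {u : Multiplicative (ZMod (p ^ e j)) // u ^ p ^ k = 1} := by
    rw [← Nat.card_pi]
    refine Nat.card_congr ?_
    refine (Equiv.subtypeEquivRight (fun y => ?_)).trans (Equiv.subtypePiEquivPi)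
    constructor
    · intro hy j; exact congrFun hy j
    · intro hy; funext j; exact hy j
  have h3 : ∀ j : Fin m, Nat.card {u : Multiplicative (ZMod (p ^ e j)) // u ^ p ^ k = 1}
      = p ^ min (e j) k := by
    intro j
    rw [← card_torsion_zmod hp (e j) k]
    refine Nat.card_congr (Equiv.subtypeEquiv Multiplicative.toAdd (fun u => ?_))
    rw [← toAdd_pow]
    exact ⟨fun h => by rw [h]; rfl, fun h => by
      have : (u ^ p ^ k) = Multiplicative.ofAdd (0 : ZMod (p ^ e j)) := by
        apply Multiplicative.toAdd.injective; simpa using h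
      simpa using this⟩
  rw [h1, h2, Finset.prod_congr rfl (fun j _ => h3 j), Finset.prod_pow_eq_pow_sum]

lemma index_pw {X : Type*} [CommGroup X] [Finite X] (n : ℕ) :
    (pw n X).index = Nat.card {x : X // x ^ n = 1} := by
  have h1 : (MonoidHom.ker (powMonoidHom n : X →* X)).index = Nat.card (pw n X) :=
    Subgroup.index_ker _
  have h2 := Subgroup.card_mul_index (pw n X)
  have h3 := Subgroup.card_mul_index (MonoidHom.ker (powMonoidHom n : X →* X))
  have hker : Nat.card (MonoidHom.ker (powMonoidHom n : X →* X))
      = Nat.card {x : X // x ^ n = 1} := by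
    refine Nat.card_congr (Equiv.subtypeEquivRight (fun x => ?_))
    simp [MonoidHom.mem_ker, powMonoidHom_apply]
  have hpos : 0 < Nat.card (pw n X) := Nat.card_pos
  rw [← hker]
  rw [h1] at h3
  nlinarith [h2, h3]

lemma index_pw_eq_pow {p : ℕ} (hp : p.Prime) {X : Type*} [CommGroup X] [Finite X]
    {m : ℕ} {e : Fin m → ℕ} (hd : HasDecomp p X e) (k : ℕ) :
    (pw (p ^ k) X).index = p ^ (∑ j, min (e j) k) := by
  rw [index_pw, card_torsion_of_decomp hp hd k]

section Surjection

variable {A Q : Type*} [CommGroup A] [CommGroup Q] [Finite A] [Finite Q]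
  (π : A →* Q)

lemma comap_pw (hπ : Function.Surjective π) (n : ℕ) :
    (pw n Q).comap π = π.ker ⊔ pw n A := by
  apply le_antisymm
  · intro a ha
    obtain ⟨y, hy⟩ := ha
    obtain ⟨x, rfl⟩ := hπ y
    have hb : a * (x ^ n)⁻¹ ∈ π.ker := by
      rw [MonoidHom.mem_ker, map_mul, map_inv, map_pow]
      rw [powMonoidHom_apply] at hy
      rw [hy, mul_inv_cancel]
    have : a = (a * (x ^ n)⁻¹) * x ^ n := by group
    rw [this]
    exact Subgroup.mul_mem _ (Subgroup.mem_sup_left hb)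
      (Subgroup.mem_sup_right ⟨x, rfl⟩)
  · refine sup_le ?_ ?_
    · intro a ha
      rw [Subgroup.mem_comap]
      rw [MonoidHom.mem_ker] at ha
      rw [ha]
      exact one_mem_pw n
    · rintro a ⟨y, rfl⟩
      rw [Subgroup.mem_comap]
      exact ⟨π y, by rw [powMonoidHom_apply, powMonoidHom_apply, map_pow]⟩

lemma index_pw_comap (hπ : Function.Surjective π) (n : ℕ) :
    (π.ker ⊔ pw n A).index = (pw n Q).index := by
  rw [← comap_pw π hπ n, Subgroup.index_comap_of_surjective _ hπ]

lemma index_pw_le (hπ : Function.Surjective π) (n : ℕ) :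
    (pw n Q).index ≤ (pw n A).index := by
  rw [← index_pw_comap π hπ n]
  exact Nat.le_of_dvd (Nat.pos_of_ne_zero (Subgroup.index_ne_zero_of_finite))
    (Subgroup.index_dvd_of_le le_sup_right)

lemma ker_le_pw_iff (hπ : Function.Surjective π) (n : ℕ) :
    π.ker ≤ pw n A ↔ (pw n Q).index = (pw n A).index := by
  constructor
  · intro h
    rw [← index_pw_comap π hπ n, sup_eq_right.mpr h]
  · intro h
    rw [← index_pw_comap π hπ n] at h
    have hle : pw n A ≤ π.ker ⊔ pw n A := le_sup_right
    have hcard : Nat.card (π.ker ⊔ pw n A : Subgroup A) ≤ Nat.card (pw n A) := by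
      have h1 := Subgroup.card_mul_index (pw n A)
      have h2 := Subgroup.card_mul_index (π.ker ⊔ pw n A)
      have hpos : 0 < (pw n A).index :=
        Nat.pos_of_ne_zero Subgroup.index_ne_zero_of_finite
      rw [← h] at h1
      nlinarith [h1, h2]
    have heq := Subgroup.eq_of_le_of_card_ge hle hcard
    rw [heq]
    exact le_sup_left

end Surjection

section Comb

variable {m : ℕ}

lemma antitone_count {e : Fin m → ℕ} (he : Antitone e) (k : ℕ) (j : Fin m) :
    k ≤ e j ↔ (j : ℕ) < Fintype.card {i // k ≤ e i} :=
  by rw [Fintype.card_subtype]; exact (Tuple.lt_card_ge_iff_apply_ge_of_antitone (f := e) (a := k) (j := j) he).symm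

lemma sum_min_succ (e : Fin m → ℕ) (k : ℕ) :
    ∑ j, min (e j) (k + 1) = ∑ j, min (e j) k + Fintype.card {i // k + 1 ≤ e i} := by
  classical
  have h : ∀ j : Fin m, min (e j) (k + 1) = min (e j) k + (if k + 1 ≤ e j then 1 else 0) := by
    intro j; split <;> omega
  rw [Finset.sum_congr rfl (fun j _ => h j), Finset.sum_add_distrib, Finset.sum_boole,
    Fintype.card_subtype]
  simp

lemma counts_eq {β γ : Fin m → ℕ} {k : ℕ}
    (h1 : ∑ j, min (β j) k = ∑ j, min (γ j) k)
    (h2 : ∑ j, min (β j) (k + 1) = ∑ j, min (γ j) (k + 1)) :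
    Fintype.card {i // k + 1 ≤ β i} = Fintype.card {i // k + 1 ≤ γ i} := by
  rw [sum_min_succ, sum_min_succ, h1] at h2
  omega

/-- Forward direction: conclude `c ≤ β r` at an index where `β r < γ r`. -/
lemma comb_forward {β γ : Fin m → ℕ} (hβ : Antitone β) (hγ : Antitone γ) {c : ℕ}
    (hsum : ∀ k ≤ c, ∑ j, min (β j) k = ∑ j, min (γ j) k)
    {r : Fin m} (hlt : β r < γ r) : c ≤ β r := by
  by_contra hcon
  push_neg at hcon
  set k := β r with hk
  have hk1 : k + 1 ≤ c := hcon
  have hcount : Fintype.card {i // k + 1 ≤ β i} = Fintype.card {i // k + 1 ≤ γ i} :=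
    counts_eq (hsum k (by omega)) (hsum (k + 1) hk1)
  have hγr : k + 1 ≤ γ r := by omega
  have h1 : (r : ℕ) < Fintype.card {i // k + 1 ≤ γ i} := (antitone_count hγ (k + 1) r).mp hγr
  have h2 : k + 1 ≤ β r := (antitone_count hβ (k + 1) r).mpr (hcount ▸ h1)
  omega

/-- With `c ≤ β r < γ r` and agreement above `r`, the `min c` sequences agree. -/
lemma comb_min_eq {β γ : Fin m → ℕ} (hβ : Antitone β) (hγ : Antitone γ) {c : ℕ} {r : Fin m}
    (hc : c ≤ β r) (hlt : β r < γ r) (hag : ∀ j, r < j → β j = γ j) (j : Fin m) :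
    min (β j) c = min (γ j) c := by
  rcases le_or_gt j r with h | h
  · have h1 : β r ≤ β j := hβ h
    have h2 : γ r ≤ γ j := hγ h
    omega
  · rw [hag j h]

/-- The last index of difference cannot have `γ r < β r`. -/
lemma comb_no_reverse {β γ : Fin m → ℕ} (hβ : Antitone β) (hγ : Antitone γ)
    (hsum : ∀ k, ∑ j, min (β j) k ≤ ∑ j, min (γ j) k)
    {r : Fin m} (hgt : γ r < β r) (hag : ∀ j, r < j → β j = γ j) : False := by
  set k := β r with hk
  have hstrict : ∑ j, min (γ j) k < ∑ j, min (β j) k := by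
    refine Finset.sum_lt_sum (fun i _ => ?_) ⟨r, Finset.mem_univ r, ?_⟩
    · rcases le_or_gt i r with h | h
      · have h1 : β r ≤ β i := hβ h
        omega
      · rw [hag i h]
    · omega
  exact absurd (hsum k) (by omega)

end Comb

section Decomp

/-- Reindexing mul-equiv for Pi types. -/
def piReindex {ι κ : Type*} (τ : κ ≃ ι) (F : ι → Type*) [∀ i, MulOneClass (F i)] :
    ((i : ι) → F i) ≃* ((j : κ) → F (τ j)) :=
  { Equiv.piCongrLeft' F τ.symm with map_mul' := fun _ _ => rfl }

lemma hasDecomp_exists {p : ℕ} (hp : p.Prime) (X : Type*) [CommGroup X] [Finite X]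
    (hX : IsPGroup p X) :
    ∃ (m : ℕ) (e : Fin m → ℕ), HasDecomp p X e := by
  classical
  haveI : Fact p.Prime := ⟨hp⟩
  obtain ⟨ι, instF, n, hn1, ⟨ι0⟩⟩ := CommGroup.equiv_prod_multiplicative_zmod_of_finite X
  -- each n i is a power of p
  have hd : ∀ i : ι, ∃ d : ℕ, n i = p ^ d := by
    intro i
    have hx : orderOf (ι0.symm (Pi.mulSingle i (Multiplicative.ofAdd (1 : ZMod (n i))))) = n i := by
      rw [MulEquiv.orderOf_eq, orderOf_piMulSingle, orderOf_ofAdd_eq_addOrderOf,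
        ZMod.addOrderOf_one]
    obtain ⟨k, hk⟩ := (IsPGroup.iff_orderOf.mp hX) (ι0.symm (Pi.mulSingle i
      (Multiplicative.ofAdd (1 : ZMod (n i)))))
    rw [hx] at hk
    exact ⟨k, hk⟩
  choose d hdeq using hd
  set m := Fintype.card ι with hm
  set κ : Fin m ≃ ι := (Fintype.equivFin ι).symm with hκ
  set f : Fin m → ℕ := fun j => d (κ j) with hf
  set σ := Tuple.sort f with hσ
  have hmono : Monotone (f ∘ σ) := Tuple.monotone_sort f
  set τ : Fin m ≃ ι := (Fin.revPerm.trans σ).trans κ with hτ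
  set e : Fin m → ℕ := fun j => d (τ j) with he
  have hτj : ∀ j, τ j = κ (σ (Fin.rev j)) := fun j => rfl
  refine ⟨m, e, ?_, ?_, ?_⟩
  · intro a b hab
    have : Fin.rev b ≤ Fin.rev a := Fin.rev_le_rev.mpr hab
    have h2 := hmono this
    simpa [he, hτj, Function.comp] using h2
  · intro j
    have h1 : 1 < n (τ j) := hn1 (τ j)
    rw [hdeq (τ j)] at h1
    show 0 < d (τ j)
    rcases Nat.eq_zero_or_pos (d (τ j)) with h | h
    · rw [h, pow_zero] at h1; omega
    · exact h
  · refine ⟨ι0.trans ((piReindex τ (fun i => Multiplicative (ZMod (n i)))).trans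
      (MulEquiv.piCongrRight (fun j => ?_)))⟩
    exact AddEquiv.toMultiplicative (ZMod.ringEquivCongr (hdeq (τ j))).toAddEquiv

/-- The hom `Multiplicative (ZMod N) →* C` sending `1` to `g`, given `g ^ N = 1`. -/
def zmodHom {C : Type*} [Group C] (N : ℕ) [NeZero N] {g : C} (hg : g ^ N = 1) :
    Multiplicative (ZMod N) →* C :=
  MonoidHom.mk' (fun u => g ^ (Multiplicative.toAdd u).val)
    (by
      have hmod : ∀ s : ℕ, g ^ (s % N) = g ^ s := by
        intro s
        conv_rhs => rw [← Nat.div_add_mod s N]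
        rw [pow_add, pow_mul, hg, one_pow, one_mul]
      intro a b
      show g ^ (Multiplicative.toAdd a + Multiplicative.toAdd b).val = _
      rw [ZMod.val_add, hmod, pow_add])

lemma zmodHom_apply {C : Type*} [Group C] (N : ℕ) [NeZero N] {g : C} (hg : g ^ N = 1)
    (u : Multiplicative (ZMod N)) : zmodHom N hg u = g ^ (Multiplicative.toAdd u).val := rfl

lemma rank_of_decomp {p : ℕ} (hp : p.Prime) {X : Type*} [CommGroup X] [Finite X]
    {m : ℕ} {e : Fin m → ℕ} (hd : HasDecomp p X e) : Group.rank X = m := by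
  classical
  obtain ⟨hmono, hpos, ⟨ι⟩⟩ := hd
  haveI : NeZero p := ⟨hp.pos.ne'⟩
  apply le_antisymm
  · -- rank ≤ m : explicit generators
    set gen : Fin m → X := fun j => ι.symm (Pi.mulSingle j (Multiplicative.ofAdd
      (1 : ZMod (p ^ e j)))) with hgen
    set S : Finset X := Finset.image gen Finset.univ with hS
    have hclosure : Subgroup.closure (S : Set X) = ⊤ := by
      rw [eq_top_iff]
      intro x _
      have key : ∀ j : Fin m, ι x j = (Multiplicative.ofAdd (1 : ZMod (p ^ e j)))
          ^ (Multiplicative.toAdd (ι x j)).val := by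
        intro j
        haveI : NeZero (p ^ e j) := ⟨(pow_pos hp.pos _).ne'⟩
        rw [← ofAdd_nsmul, nsmul_eq_mul, mul_one, ZMod.natCast_val, ZMod.cast_id,
          ofAdd_toAdd]
      obtain ⟨t, ht⟩ : ∃ t : Fin m → ℕ, ∀ j, ι x j = (Multiplicative.ofAdd
          (1 : ZMod (p ^ e j))) ^ t j :=
        ⟨fun j => (Multiplicative.toAdd (ι x j)).val, key⟩
      have h3 : ι x = ∏ j, (Pi.mulSingle j (Multiplicative.ofAdd (1 : ZMod (p ^ e j)))
          : (j' : Fin m) → Multiplicative (ZMod (p ^ e j'))) ^ t j := by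
        rw [(Finset.univ_prod_mulSingle (ι x)).symm]
        refine Finset.prod_congr rfl (fun j _ => ?_)
        rw [← Pi.mulSingle_pow, ← ht j]
      have hx : x = ∏ j, (gen j) ^ t j := by
        calc x = ι.symm (ι x) := (ι.symm_apply_apply x).symm
        _ = ∏ j, (gen j) ^ t j := by
            rw [h3, map_prod]
            exact Finset.prod_congr rfl (fun j _ => by rw [map_pow])
      rw [hx]
      exact Subgroup.prod_mem _ (fun j _ => Subgroup.pow_mem _
        (Subgroup.subset_closure (Finset.mem_coe.mpr
          (Finset.mem_image.mpr ⟨j, Finset.mem_univ j, rfl⟩))) _)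
    calc Group.rank X ≤ S.card := Group.rank_le hclosure
    _ ≤ Finset.univ.card := Finset.card_image_le
    _ = m := by simp
  · -- m ≤ rank
    obtain ⟨S, hScard, hSgen⟩ := Group.rank_spec X
    set E := X ⧸ pw p X with hE
    have hEcard : Nat.card E = p ^ m := by
      have h1 : (pw p X).index = Nat.card E := Subgroup.index_eq_card _
      have h2 : (pw (p ^ 1) X).index = p ^ (∑ j, min (e j) 1) := index_pw_eq_pow hp
        ⟨hmono, hpos, ⟨ι⟩⟩ 1
      rw [pow_one] at h2
      have h3 : (∑ j, min (e j) 1) = m := by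
        rw [Finset.sum_congr rfl (fun j _ => min_eq_right (hpos j) : ∀ j ∈ Finset.univ,
          min (e j) 1 = 1)]
        simp
      rw [← h1, h2, h3]
    have hexp : ∀ y : E, y ^ p = 1 := by
      intro y
      induction y using QuotientGroup.induction_on with
      | H x =>
        rw [← QuotientGroup.mk_pow, QuotientGroup.eq_one_iff]
        exact ⟨x, rfl⟩
    -- E is generated by images of S, and has exponent p
    set ψ : ∀ _ : {x // x ∈ S}, Multiplicative (ZMod p) →* E :=
      fun s => zmodHom p (hexp (QuotientGroup.mk s.1)) with hψ
    set Φ : ((_ : {x // x ∈ S}) → Multiplicative (ZMod p)) →* E :=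
      MonoidHom.noncommPiCoprod ψ (fun _ _ _ x y => Commute.all _ _) with hΦ
    have hsurj : Function.Surjective Φ := by
      rw [← MonoidHom.range_eq_top]
      rw [eq_top_iff]
      have hgen : Subgroup.closure (⇑(QuotientGroup.mk' (pw p X)) '' (S : Set X)) = ⊤ := by
        rw [← MonoidHom.map_closure (QuotientGroup.mk' (pw p X)) (S : Set X)]
        rw [hSgen]
        exact Subgroup.map_top_of_surjective _ (QuotientGroup.mk'_surjective _)
      rw [← hgen]
      rw [Subgroup.closure_le]
      rintro y ⟨x, hxS, rfl⟩
      refine ⟨Pi.mulSingle (⟨x, hxS⟩ : {x // x ∈ S}) (Multiplicative.ofAdd (1 : ZMod p)), ?_⟩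
      rw [hΦ]; refine (MonoidHom.noncommPiCoprod_mulSingle _ _ _).trans ?_
      show (QuotientGroup.mk x : E) ^ (Multiplicative.toAdd
        (Multiplicative.ofAdd (1 : ZMod p))).val = _
      haveI : Fact (1 < p) := ⟨hp.one_lt⟩
      rw [toAdd_ofAdd, ZMod.val_one, pow_one]
      rfl
    have hcard : Nat.card E ≤ p ^ S.card := by
      calc Nat.card E ≤ Nat.card ((_ : {x // x ∈ S}) → Multiplicative (ZMod p)) :=
        Nat.card_le_card_of_surjective Φ hsurj
      _ = p ^ S.card := by
        rw [Nat.card_pi]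
        have : ∀ s : {x // x ∈ S}, Nat.card (Multiplicative (ZMod p)) = p := by
          intro s
          rw [Nat.card_congr (Multiplicative.toAdd (α := ZMod p)), Nat.card_zmod]
        rw [Finset.prod_congr rfl (fun s _ => this s)]
        rw [Finset.prod_const, Finset.card_univ, Fintype.card_coe]
    rw [hEcard] at hcard
    have := (Nat.pow_le_pow_iff_right hp.one_lt).mp hcard
    omega

lemma hasDecomp_exists_rank {p : ℕ} (hp : p.Prime) (X : Type*) [CommGroup X] [Finite X]
    (hX : IsPGroup p X) :
    ∃ (m : ℕ) (e : Fin m → ℕ), HasDecomp p X e ∧ Group.rank X = m := by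
  obtain ⟨m, e, hd⟩ := hasDecomp_exists hp X hX
  exact ⟨m, e, hd, rank_of_decomp hp hd⟩

end Decomp

section Separation

/-- A power-membership transfers through the decomposition componentwise. -/
lemma exists_hom_ne_one {p : ℕ} (hp : p.Prime) {X C : Type*} [CommGroup X] [Group C]
    {m : ℕ} {e : Fin m → ℕ} (hd : HasDecomp p X e) {g : C} {c : ℕ}
    (hg : orderOf g = p ^ c) {a : X} (ha : a ∉ pw (p ^ c) X) :
    ∃ φ : X →* C, φ a ≠ 1 := by
  classical
  obtain ⟨-, -, ⟨ι⟩⟩ := hd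
  -- find a coordinate witnessing non-power
  have hnotall : ¬ ∀ j : Fin m, ∃ w : Multiplicative (ZMod (p ^ e j)), w ^ p ^ c = ι a j := by
    intro hall
    apply ha
    choose w hw using hall
    refine ⟨ι.symm w, ?_⟩
    rw [powMonoidHom_apply, ← map_pow]
    have : w ^ p ^ c = ι a := funext hw
    rw [this, ι.symm_apply_apply]
  push_neg at hnotall
  obtain ⟨j, hj⟩ := hnotall
  set v : ZMod (p ^ e j) := Multiplicative.toAdd (ι a j) with hv
  haveI : NeZero (p ^ e j) := ⟨(pow_pos hp.pos _).ne'⟩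
  have hvdvd : ¬ p ^ min (e j) c ∣ v.val := by
    rw [← zmod_exists_nsmul_iff hp]
    rintro ⟨w, hw⟩
    exact hj (Multiplicative.ofAdd w) (by
      rw [← ofAdd_nsmul, hw, hv, ofAdd_toAdd])
  -- build the homomorphism
  set t : ℕ := p ^ (c - min (e j) c) with htdef
  have hgt : (g ^ t) ^ (p ^ e j) = 1 := by
    rw [← pow_mul, ← orderOf_dvd_iff_pow_eq_one, hg, htdef, ← pow_add]
    exact pow_dvd_pow p (by omega)
  set φ : X →* C := ((zmodHom (p ^ e j) hgt).comp
    ((Pi.evalMonoidHom (fun j' : Fin m => Multiplicative (ZMod (p ^ e j'))) j).comp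
      ι.toMonoidHom)) with hφ
  refine ⟨φ, ?_⟩
  have hφa : φ a = (g ^ t) ^ v.val := rfl
  rw [hφa, ← pow_mul]
  rw [ne_eq, ← orderOf_dvd_iff_pow_eq_one, hg]
  intro hdvd
  apply hvdvd
  rw [mul_comm] at hdvd
  exact (nat_dvd_aux2 hp c (min (e j) c) v.val (min_le_right _ _)).mp hdvd

end Separation

section Main

variable {p : ℕ}

/-- The main abelian-group-theoretic equivalence. -/
lemma abelian_iff (hp : p.Prime) {A Q : Type*} [CommGroup A] [CommGroup Q]
    [Finite A] [Finite Q] (hA : IsPGroup p A) (π : A →* Q)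
    (hπ : Function.Surjective π) {c : ℕ} (hc : 1 ≤ c) :
    π.ker ≤ pw (p ^ c) A ↔
      (Group.rank Q = Group.rank A ∧ ∀ (m : ℕ) (β γ : Fin m → ℕ),
        HasDecomp p Q β → HasDecomp p A γ →
        ∀ r : Fin m, β r < γ r → (∀ j, r < j → β j = γ j) → p ^ c ≤ p ^ β r) := by
  have hQ : IsPGroup p Q := IsPGroup.of_surjective hA π hπ
  obtain ⟨m1, e1, hd1, hr1⟩ := hasDecomp_exists_rank hp Q hQ
  obtain ⟨m2, e2, hd2, hr2⟩ := hasDecomp_exists_rank hp A hA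
  have hsumle : ∀ (k : ℕ) {mm : ℕ} (β γ : Fin mm → ℕ), HasDecomp p Q β → HasDecomp p A γ →
      ∑ j, min (β j) k ≤ ∑ j, min (γ j) k := by
    intro k mm β γ hdβ hdγ
    have h1 := index_pw_eq_pow hp hdβ k
    have h2 := index_pw_eq_pow hp hdγ k
    have h3 := index_pw_le π hπ (p ^ k)
    rw [h1, h2] at h3
    exact (Nat.pow_le_pow_iff_right hp.one_lt).mp h3
  constructor
  · intro hker
    have hidx : ∀ k, k ≤ c → (pw (p ^ k) Q).index = (pw (p ^ k) A).index := by
      intro k hk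
      exact (ker_le_pw_iff π hπ (p ^ k)).mp (hker.trans (pw_le_pw (pow_dvd_pow p hk)))
    constructor
    · have h1 := hidx 1 hc
      rw [index_pw_eq_pow hp hd1 1, index_pw_eq_pow hp hd2 1] at h1
      have hm1 : ∑ j, min (e1 j) 1 = m1 := by
        rw [Finset.sum_congr rfl (fun j _ => min_eq_right (hd1.2.1 j))]
        simp
      have hm2 : ∑ j, min (e2 j) 1 = m2 := by
        rw [Finset.sum_congr rfl (fun j _ => min_eq_right (hd2.2.1 j))]
        simp
      rw [hm1, hm2] at h1
      have := Nat.pow_right_injective hp.two_le h1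
      rw [hr1, hr2, this]
    · intro mm β γ hdβ hdγ r hlt hag
      have hsumeq : ∀ k, k ≤ c → ∑ j, min (β j) k = ∑ j, min (γ j) k := by
        intro k hk
        have h := hidx k hk
        rw [index_pw_eq_pow hp hdβ k, index_pw_eq_pow hp hdγ k] at h
        exact Nat.pow_right_injective hp.two_le h
      refine Nat.pow_le_pow_right hp.pos ?_
      exact comb_forward hdβ.1 hdγ.1 hsumeq hlt
  · rintro ⟨hrank, hvar⟩
    have hm : m1 = m2 := by rw [← hr1, ← hr2, hrank]
    subst hm
    -- compare e1 and e2
    classical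
    by_cases hne : ∃ j, e1 j ≠ e2 j
    · set s : Finset (Fin m1) := Finset.univ.filter (fun j => e1 j ≠ e2 j) with hs
      have hsne : s.Nonempty := by
        obtain ⟨j, hj⟩ := hne
        exact ⟨j, by rw [hs]; simp [hj]⟩
      set r := s.max' hsne with hr
      have hrmem : e1 r ≠ e2 r := by
        have hmem := s.max'_mem hsne
        exact (Finset.mem_filter.mp hmem).2
      have hag : ∀ j, r < j → e1 j = e2 j := by
        intro j hj
        by_contra hcon
        have hjs : j ∈ s := by rw [hs]; simp [hcon]
        exact absurd (s.le_max' j hjs) (by omega)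
      rcases lt_trichotomy (e1 r) (e2 r) with hlt | heq | hgt
      · have hvc : p ^ c ≤ p ^ e1 r := hvar m1 e1 e2 hd1 hd2 r hlt hag
        have hcr : c ≤ e1 r := (Nat.pow_le_pow_iff_right hp.one_lt).mp hvc
        have hmineq : ∀ j, min (e1 j) c = min (e2 j) c :=
          comb_min_eq hd1.1 hd2.1 hcr hlt hag
        rw [ker_le_pw_iff π hπ (p ^ c), index_pw_eq_pow hp hd1 c, index_pw_eq_pow hp hd2 c,
          Finset.sum_congr rfl (fun j _ => hmineq j)]
      · exact absurd heq hrmem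
      · exact absurd (comb_no_reverse hd1.1 hd2.1
          (fun k => hsumle k e1 e2 hd1 hd2) hgt hag) (by simp)
    · push_neg at hne
      rw [ker_le_pw_iff π hπ (p ^ c), index_pw_eq_pow hp hd1 c, index_pw_eq_pow hp hd2 c,
        Finset.sum_congr rfl (fun j _ => by rw [hne j])]

end Main

/-- Quotient by a subgroup containing the commutator subgroup is commutative. -/
def commGroupQuotient {G : Type*} [Group G] (N : Subgroup G) [N.Normal]
    (h : commutator G ≤ N) : CommGroup (G ⧸ N) :=
  { (inferInstance : Group (G ⧸ N)) with
    mul_comm := by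
      intro a b
      induction a using QuotientGroup.induction_on with
      | H x =>
      induction b using QuotientGroup.induction_on with
      | H y =>
      rw [← QuotientGroup.mk_mul, ← QuotientGroup.mk_mul, QuotientGroup.eq]
      have heq : (x * y)⁻¹ * (y * x) = @Bracket.bracket G G commutatorElement y⁻¹ x⁻¹ := by
        rw [commutatorElement_def]
        group
      rw [heq]
      exact h (Subgroup.commutator_mem_commutator (Subgroup.mem_top _) (Subgroup.mem_top _)) }

end IAAux


/-- Corollary 2.8: for a finite `p`-group `G` of nilpotence class 2 (i.e. `⊥ ≠ G' ≤ Z(G)`),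
`IA(G) = IA(G)*` iff either `G' = Z(G)`, or `d(G/Z(G)) = d(G/G')` and
`exp(G') ≤ var(G/Z(G), G/G')`. -/
theorem IA_eq_IAstar_iff {p : ℕ} (hp : p.Prime) {G : Type*} [Group G] [Fintype G]
    (hG : IsPGroup p G)
    (hle : commutator G ≤ Subgroup.center G) (hne : commutator G ≠ ⊥) :
    autCentMod (commutator G) =
        autCentMod (commutator G) ⊓ autFix (Subgroup.center G) ↔
      commutator G = Subgroup.center G ∨
        (Group.rank (G ⧸ Subgroup.center G) = Group.rank (G ⧸ commutator G) ∧
          varLe p (G ⧸ Subgroup.center G) (G ⧸ commutator G)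
            (Monoid.exponent ↥(commutator G))) := by
  classical
  set K := commutator G with hKdef
  set Z := Subgroup.center G with hZdef
  haveI : Fact p.Prime := ⟨hp⟩
  letI cA : CommGroup (G ⧸ K) := IAAux.commGroupQuotient K le_rfl
  letI cQ : CommGroup (G ⧸ Z) := IAAux.commGroupQuotient Z hle
  letI cK : CommGroup ↥K := centralCommGroup hle
  haveI : Finite (G ⧸ K) := Quotient.finite _
  haveI : Finite (G ⧸ Z) := Quotient.finite _
  -- exponent of K is p^c with c ≥ 1
  have hKp : IsPGroup p ↥K := hG.to_subgroup K
  obtain ⟨nn, hcard⟩ := IsPGroup.iff_card.mp hKp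
  have hexp_dvd : Monoid.exponent ↥K ∣ p ^ nn := hcard ▸ Group.exponent_dvd_nat_card
  obtain ⟨c, hcle, hn⟩ := (Nat.dvd_prime_pow hp).mp hexp_dvd
  have hc1 : 1 ≤ c := by
    rcases Nat.eq_zero_or_pos c with h0 | h
    · exfalso
      apply hne
      apply (Subgroup.eq_bot_iff_forall K).mpr
      intro x hx
      have h1 : (⟨x, hx⟩ : ↥K) = 1 := by
        have h2 := Monoid.pow_exponent_eq_one (⟨x, hx⟩ : ↥K)
        rwa [hn, h0, pow_zero, pow_one] at h2
      exact congrArg Subtype.val h1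
    · exact h
  -- the projection map
  set π : (G ⧸ K) →* (G ⧸ Z) :=
    QuotientGroup.map K Z (MonoidHom.id G) (by rw [Subgroup.comap_id]; exact hle) with hπdef
  have hπ : Function.Surjective π := by
    intro q
    induction q using QuotientGroup.induction_on with
    | H x => exact ⟨QuotientGroup.mk x, by rw [hπdef, QuotientGroup.map_mk]; rfl⟩
  have hker : ∀ x : G, ((QuotientGroup.mk x : G ⧸ K) ∈ π.ker ↔ x ∈ Z) := by
    intro x
    rw [MonoidHom.mem_ker, hπdef, QuotientGroup.map_mk, MonoidHom.id_apply,
      QuotientGroup.eq_one_iff]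
  -- every homomorphism G →* K kills K
  have hfK : ∀ f : G →* ↥K, ∀ x ∈ K, f x = 1 := by
    intro f
    have hKle : K ≤ f.ker := by
      show ⁅(⊤ : Subgroup G), ⊤⁆ ≤ f.ker
      refine Subgroup.commutator_le.mpr (fun g₁ _ g₂ _ => ?_)
      rw [MonoidHom.mem_ker, map_commutatorElement]
      exact commutatorElement_eq_one_iff_commute.mpr (Commute.all _ _)
    intro x hx
    exact hKle hx
  -- Step 1 : the automorphism condition is equivalent to the homomorphism condition
  have hiff1 : (autCentMod K = autCentMod K ⊓ autFix Z) ↔ autCentMod K ≤ autFix Z := by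
    rw [eq_comm]
    exact inf_eq_left
  have hstep1 : (autCentMod K ≤ autFix Z) ↔ (∀ f : G →* ↥K, ∀ z ∈ Z, f z = 1) := by
    constructor
    · intro h f z hz
      set φ : G →* G :=
        { toFun := fun x => x * (f x : G)
          map_one' := by simp
          map_mul' := by
            intro x y
            have hc1 : ((f x : G)) ∈ Z := hle (f x).2
            have hcm := Subgroup.mem_center_iff.mp hc1 y
            show x * y * ((f (x * y) : ↥K) : G) = x * (f x : G) * (y * (f y : G))
            rw [map_mul f, Subgroup.coe_mul]
            calc x * y * ((f x : G) * (f y : G)) = x * (y * (f x : G)) * (f y : G) := by group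
            _ = x * ((f x : G) * y) * (f y : G) := by rw [hcm]
            _ = x * (f x : G) * (y * (f y : G)) := by group } with hφdef
      have hker0 : ∀ x, φ x = 1 → x = 1 := by
        intro x hx
        have hx' : x * (f x : G) = 1 := hx
        have hxK : x ∈ K := by
          have h1 : x = (f x : G)⁻¹ := mul_eq_one_iff_eq_inv.mp hx'
          rw [h1]
          exact K.inv_mem (f x).2
        have h2 := hfK f x hxK
        rw [h2] at hx'
        simpa using hx'
      have hinj : Function.Injective φ := by
        intro a b hab
        have h1 : φ (a * b⁻¹) = 1 := by rw [map_mul, map_inv, hab, mul_inv_cancel]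
        exact mul_inv_eq_one.mp (hker0 _ h1)
      set α : MulAut G := MulEquiv.ofBijective φ ⟨hinj, Finite.surjective_of_injective hinj⟩
        with hα
      have hαmem : α ∈ autCentMod K := by
        intro x
        have h1 : α x = x * (f x : G) := rfl
        rw [h1]
        have h2 : x⁻¹ * (x * (f x : G)) = (f x : G) := by group
        rw [h2]
        exact (f x).2
      have h3 : α z = z := h hαmem z hz
      have h4 : z * (f z : G) = z := h3
      exact Subtype.ext (mul_eq_left.mp h4)
    · intro h α hα y hy
      set f : G →* ↥K :=
        { toFun := fun x => ⟨x⁻¹ * α x, hα x⟩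
          map_one' := by
            apply Subtype.ext
            simp
          map_mul' := by
            intro x y'
            apply Subtype.ext
            show (x * y')⁻¹ * α (x * y') = (x⁻¹ * α x) * (y'⁻¹ * α y')
            have hc1 : x⁻¹ * α x ∈ Z := hle (hα x)
            have hcm := Subgroup.mem_center_iff.mp hc1 y'⁻¹
            rw [map_mul α, mul_inv_rev]
            calc y'⁻¹ * x⁻¹ * (α x * α y') = y'⁻¹ * (x⁻¹ * α x) * α y' := by group
            _ = (x⁻¹ * α x) * y'⁻¹ * α y' := by rw [hcm]
            _ = (x⁻¹ * α x) * (y'⁻¹ * α y') := by group } with hfdef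
      have h1 : f y = 1 := h f y hy
      have h2 : y⁻¹ * α y = 1 := congrArg Subtype.val h1
      exact (inv_mul_eq_one.mp h2).symm
  -- Step 2 : the homomorphism condition is equivalent to the power condition
  have hstep2 : (∀ f : G →* ↥K, ∀ z ∈ Z, f z = 1) ↔ π.ker ≤ IAAux.pw (p ^ c) (G ⧸ K) := by
    constructor
    · intro h a ha
      by_contra hpw
      obtain ⟨mA, eA, hdA⟩ := IAAux.hasDecomp_exists hp (G ⧸ K) (hG.to_quotient K)
      obtain ⟨g, hg⟩ : ∃ g : ↥K, orderOf g = p ^ c := by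
        have hex := Monoid.exists_orderOf_eq_exponent (G := ↥K) Monoid.ExponentExists.of_finite
        obtain ⟨g, hg⟩ := hex; exact ⟨g, hg.trans hn⟩
      obtain ⟨φ, hφ⟩ := IAAux.exists_hom_ne_one hp hdA hg hpw
      obtain ⟨x, rfl⟩ := QuotientGroup.mk'_surjective K a
      have hxZ : x ∈ Z := (hker x).mp ha
      have h1 := h (φ.comp (QuotientGroup.mk' K)) x hxZ
      exact hφ h1
    · intro h f z hz
      have hKle : K ≤ f.ker := fun x hx => by
        rw [MonoidHom.mem_ker]
        exact hfK f x hx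
      set φ := QuotientGroup.lift K f hKle with hφdef
      have hmem : (QuotientGroup.mk z : G ⧸ K) ∈ π.ker := (hker z).mpr hz
      obtain ⟨y, hy⟩ := h hmem
      rw [powMonoidHom_apply] at hy
      have h1 : f z = φ (QuotientGroup.mk z) := rfl
      rw [h1, ← hy]; refine (map_pow φ y _).trans ?_
      have h2 : (φ y) ^ Monoid.exponent ↥K = 1 := Monoid.pow_exponent_eq_one (φ y)
      rwa [hn] at h2
  -- Step 3 : the abelian computation
  rw [hiff1, hstep1, hstep2]
  constructor
  · intro h
    right
    have habe := (IAAux.abelian_iff hp (hG.to_quotient K) π hπ hc1).mp h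
    refine ⟨habe.1, ?_⟩
    intro mm β γ h1 h2 r h3 h4
    rw [hn]
    exact habe.2 mm β γ h1 h2 r h3 h4
  · rintro (h | ⟨h1, h2⟩)
    · intro a ha
      obtain ⟨x, rfl⟩ := QuotientGroup.mk'_surjective K a
      have hxZ : x ∈ Z := (hker x).mp ha
      have hxK : x ∈ K := by rw [hKdef, h]; exact hxZ
      have h1 : ((QuotientGroup.mk' K) x : G ⧸ K) = 1 := (QuotientGroup.eq_one_iff x).mpr hxK
      rw [h1]
      exact IAAux.one_mem_pw _
    · refine (IAAux.abelian_iff hp (hG.to_quotient K) π hπ hc1).mpr ⟨h1, ?_⟩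
      intro mm β γ hb hgm r h3 h4
      have h5 := h2 mm β γ hb hgm r h3 h4
      rwa [hn] at h5
end

section
/- Let G be a finite non-abelian p-group. Then IA(G)* = Aut_c(G) if and only if G' = Z(G). -/
/-! ### Auxiliary lemmas -/

open scoped commutatorElement

section aux

variable {G : Type*} [Group G]

/-- hom sending `a : ZMod n` to `z ^ a.val`, for `z` with `z ^ n = 1`. -/
def zmodPowHom (z : G) {n : ℕ} [NeZero n] (hz : z ^ n = 1) :
    Multiplicative (ZMod n) →* G where
  toFun a := z ^ (a.toAdd).val
  map_one' := by simp [ZMod.val_zero]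
  map_mul' a b := by
    have hd : orderOf z ∣ n := orderOf_dvd_of_pow_eq_one hz
    show z ^ ((a.toAdd + b.toAdd).val) = z ^ (a.toAdd.val) * z ^ (b.toAdd.val)
    rw [ZMod.val_add, ← pow_add]
    exact pow_eq_pow_iff_modEq.2 (((Nat.mod_modEq _ n)).of_dvd hd)

lemma zmodPowHom_apply (z : G) {n : ℕ} [NeZero n] (hz : z ^ n = 1) (a : Multiplicative (ZMod n)) :
    zmodPowHom z hz a = z ^ (a.toAdd).val := rfl

/-- For `m ∣ n`, a character of `ZMod m` with values in `ZMod n` detecting a given `a ≠ 0`. -/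
lemma exists_zmod_hom_ne_one {m n : ℕ} (h : m ∣ n) (hn : n ≠ 0) {a : ZMod m} (ha : a ≠ 0) :
    ∃ F : Multiplicative (ZMod m) →* Multiplicative (ZMod n),
      F (Multiplicative.ofAdd a) ≠ 1 := by
  have hm : m ≠ 0 := by rintro rfl; exact hn (Nat.eq_zero_of_zero_dvd h)
  have : NeZero m := ⟨hm⟩
  have : NeZero n := ⟨hn⟩
  have hkill : (zmultiplesHom (ZMod n) ((n / m : ℕ) : ZMod n)) (m : ℤ) = 0 := by
    simp only [zmultiplesHom_apply, zsmul_eq_mul]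
    push_cast
    rw [← Nat.cast_mul, Nat.mul_div_cancel' h, ZMod.natCast_self]
  set F0 : ZMod m →+ ZMod n := ZMod.lift m ⟨zmultiplesHom (ZMod n) ((n / m : ℕ) : ZMod n), hkill⟩
    with hF0
  refine ⟨AddMonoidHom.toMultiplicative F0, ?_⟩
  have hval : F0 a = ((a.val * (n / m) : ℕ) : ZMod n) := by
    have ha' : ((a.val : ℤ) : ZMod m) = a := by push_cast; rw [ZMod.natCast_val, ZMod.cast_id]
    conv_lhs => rw [← ha']
    rw [hF0, ZMod.lift_coe]
    simp only [zmultiplesHom_apply, zsmul_eq_mul]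
    push_cast
    ring
  intro hc
  have : F0 a = 0 := by
    simpa using congrArg Multiplicative.toAdd hc
  rw [hval, ZMod.natCast_eq_zero_iff] at this
  have h1 : 0 < a.val := Nat.pos_of_ne_zero (fun hv => ha ((ZMod.val_eq_zero a).1 hv))
  have h2 : 0 < n / m := Nat.div_pos (Nat.le_of_dvd (Nat.pos_of_ne_zero hn) h) (Nat.pos_of_ne_zero hm)
  have hlt : a.val * (n / m) < n := by
    calc a.val * (n / m) < m * (n / m) := by
          exact (Nat.mul_lt_mul_right h2).2 (ZMod.val_lt a)
    _ = n := Nat.mul_div_cancel' h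
  exact absurd (Nat.le_of_dvd (Nat.mul_pos h1 h2) this) (not_le.2 hlt)

/-- Character separation: a finite abelian group has a character with values in `ZMod n`
(where the exponent divides `n`) not vanishing at a given nontrivial element. -/
lemma exists_char_ne_one {A : Type*} [CommGroup A] [Finite A] {n : ℕ}
    (hdvd : Monoid.exponent A ∣ n) (hn : n ≠ 0) {a : A} (ha : a ≠ 1) :
    ∃ φ : A →* Multiplicative (ZMod n), φ a ≠ 1 := by
  classical
  obtain ⟨ι, _, d, hd1, ⟨e⟩⟩ := CommGroup.equiv_prod_multiplicative_zmod_of_finite A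
  obtain ⟨i, hi⟩ : ∃ i : ι, e a i ≠ 1 := by
    contrapose! ha
    exact (MulEquiv.map_eq_one_iff e).mp <| funext ha
  have hdiv : d i ∣ n := by
    refine dvd_trans ?_ hdvd
    have : d i = orderOf (e.symm <| Pi.mulSingle i <| .ofAdd 1) := by
      simpa only [MulEquiv.orderOf_eq, orderOf_piMulSingle, orderOf_ofAdd_eq_addOrderOf]
        using (ZMod.addOrderOf_one (d i)).symm
    exact this ▸ Monoid.order_dvd_exponent _
  have hi' : (e a i).toAdd ≠ 0 := by simpa using hi
  obtain ⟨F, hF⟩ := exists_zmod_hom_ne_one hdiv hn hi'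
  refine ⟨(F.comp (Pi.evalMonoidHom (fun i ↦ Multiplicative (ZMod (d i))) i)).comp e.toMonoidHom, ?_⟩
  simpa using hF

/-- A finite abelian group of exponent `p ^ e` has a surjective character to `ZMod (p ^ s)`
for every `0 < s ≤ e`. -/
lemma exists_surjective_char {A : Type*} [CommGroup A] [Finite A] {p e s : ℕ} (hp : p.Prime)
    (hexp : Monoid.exponent A = p ^ e) (hse : s ≤ e) (hs : 0 < s) :
    ∃ φ : A →* Multiplicative (ZMod (p ^ s)), Function.Surjective φ := by
  have hpe : (p : ℕ) ^ e ≠ 0 := pow_ne_zero _ hp.pos.ne'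
  have : NeZero (p ^ e) := ⟨hpe⟩
  have : NeZero (p ^ s) := ⟨pow_ne_zero _ hp.pos.ne'⟩
  have he : 0 < e := lt_of_lt_of_le hs hse
  obtain ⟨x, hx⟩ := Monoid.exists_orderOf_eq_exponent (Monoid.ExponentExists.of_finite (G := A))
  rw [hexp] at hx
  have hy : x ^ (p ^ (e - 1)) ≠ 1 := by
    intro hcon
    have := orderOf_dvd_of_pow_eq_one hcon
    rw [hx] at this
    have hle := Nat.le_of_dvd (pow_pos hp.pos _) this
    exact absurd hle (not_le.2 (Nat.pow_lt_pow_right hp.one_lt (Nat.sub_lt he one_pos)))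
  obtain ⟨φ₀, hφ₀⟩ := exists_char_ne_one (n := p ^ e) (by rw [hexp]) hpe hy
  set u : ZMod (p ^ e) := (φ₀ x).toAdd with hu
  have hudvd : addOrderOf u ∣ p ^ e := by
    refine addOrderOf_dvd_of_nsmul_eq_zero ?_
    rw [nsmul_eq_mul]
    simp [ZMod.natCast_self]
  have hund : ¬ addOrderOf u ∣ p ^ (e - 1) := by
    intro hcon
    apply hφ₀
    rw [map_pow]
    apply Multiplicative.toAdd.injective
    rw [toAdd_pow, toAdd_one]
    exact addOrderOf_dvd_iff_nsmul_eq_zero.1 hcon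
  have huord : addOrderOf u = p ^ e := by
    obtain ⟨k, hk, hke⟩ := (Nat.dvd_prime_pow hp).1 hudvd
    rcases lt_or_eq_of_le hk with hlt | rfl
    · exact absurd (hke ▸ pow_dvd_pow p (Nat.le_sub_one_of_lt hlt)) hund
    · exact hke
  have huval : ((u.val : ℕ) : ZMod (p ^ e)) = u := by
    rw [ZMod.natCast_val, ZMod.cast_id]
  have hunit : IsUnit u := by
    rw [← huval, ZMod.isUnit_iff_coprime]
    have := huord
    rw [← huval, ZMod.addOrderOf_coe _ hpe] at this
    have hg : (p ^ e).gcd u.val = 1 := by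
      rcases (Nat.div_eq_self).1 this with h | h
      · exact absurd h hpe
      · exact h
    exact Nat.coprime_comm.1 hg
  refine ⟨(AddMonoidHom.toMultiplicative
      (ZMod.castHom (pow_dvd_pow p hse) (ZMod (p ^ s))).toAddMonoidHom).comp φ₀, ?_⟩
  intro b
  set c : ZMod (p ^ e) := ((b.toAdd.val : ℕ) : ZMod (p ^ e)) * u⁻¹ with hc
  refine ⟨x ^ c.val, ?_⟩
  have h1 : φ₀ (x ^ c.val) = φ₀ x ^ c.val := map_pow _ _ _
  apply Multiplicative.toAdd.injective
  show (ZMod.castHom (pow_dvd_pow p hse) (ZMod (p ^ s))) ((φ₀ (x ^ c.val)).toAdd) = b.toAdd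
  rw [h1]
  have h2 : (φ₀ x ^ c.val).toAdd = (c.val : ℕ) • u := by
    simp [hu, toAdd_pow]
  rw [h2, nsmul_eq_mul]
  have h3 : ((c.val : ℕ) : ZMod (p ^ e)) = c := by rw [ZMod.natCast_val, ZMod.cast_id]
  rw [h3, hc, mul_assoc, ZMod.inv_mul_of_unit u hunit, mul_one]
  rw [map_natCast]
  rw [ZMod.natCast_val, ZMod.cast_id]

/-- From a central-valued map-datum `f`, construct an automorphism `x ↦ x * f x`. -/
lemma construct_mulAut [Finite G] (z : G) (hz : z ∈ Subgroup.center G)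
    (f : G →* G) (hrange : ∀ x, ∃ j : ℤ, f x = z ^ j) (T : ℕ) (hfz : f z = z ^ T)
    (hcop : Nat.Coprime (orderOf z) (1 + T)) :
    ∃ α : MulAut G, ∀ x, x⁻¹ * α x = f x := by
  have hcent : ∀ x : G, f x ∈ Subgroup.center G := by
    intro x
    obtain ⟨j, hj⟩ := hrange x
    rw [hj]
    exact Subgroup.zpow_mem _ hz j
  have hcomm : ∀ (x y : G), y * f x = f x * y := fun x y =>
    Subgroup.mem_center_iff.1 (hcent x) y
  set endo : G →* G := MonoidHom.mk' (fun x => x * f x) (by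
    intro x y
    show (x * y) * f (x * y) = (x * f x) * (y * f y)
    rw [map_mul, mul_assoc, mul_assoc]
    congr 1
    rw [← mul_assoc, hcomm x y, mul_assoc]) with hendo
  have hker : ∀ x : G, endo x = 1 → x = 1 := by
    intro x hx
    obtain ⟨j, hj⟩ := hrange x
    have hx' : x * f x = 1 := hx
    have hxval : x = z ^ (-j) := by
      rw [zpow_neg, ← hj, eq_inv_iff_mul_eq_one]
      exact hx'
    have h2 : f (z ^ (-j)) = z ^ j := hxval ▸ hj
    rw [map_zpow, hfz, ← zpow_natCast, ← zpow_mul] at h2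
    have h3 : z ^ ((T : ℤ) * (-j) - j) = 1 := by
      rw [zpow_sub, h2, mul_inv_cancel]
    have hdvd : (orderOf z : ℤ) ∣ (T : ℤ) * (-j) - j := orderOf_dvd_iff_zpow_eq_one.2 h3
    have heq : (T : ℤ) * (-j) - j = -(j * (1 + (T : ℤ)))  := by ring
    rw [heq, dvd_neg] at hdvd
    have hco : IsCoprime ((orderOf z : ℕ) : ℤ) ((1 + T : ℕ) : ℤ) :=
      Nat.isCoprime_iff_coprime.2 hcop
    have h1T : ((1 + T : ℕ) : ℤ) = 1 + (T : ℤ) := by push_cast; ring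
    rw [h1T] at hco
    have hdj : (orderOf z : ℤ) ∣ j := hco.dvd_of_dvd_mul_right hdvd
    have : z ^ j = 1 := orderOf_dvd_iff_zpow_eq_one.1 hdj
    rw [hxval, zpow_neg, this, inv_one]
  have hinj : Function.Injective endo := (injective_iff_map_eq_one endo).2 hker
  refine ⟨MulEquiv.ofBijective endo (Finite.injective_iff_bijective.1 hinj), ?_⟩
  intro x
  show x⁻¹ * endo x = f x
  show x⁻¹ * (x * f x) = f x
  rw [inv_mul_cancel_left]

/-- the displacement homomorphism of an automorphism centralizing `G/Z(G)`. -/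
def iaHom (α : MulAut G) (h : ∀ x : G, x⁻¹ * α x ∈ Subgroup.center G) : G →* G :=
  MonoidHom.mk' (fun x => x⁻¹ * α x) (by
    intro x y
    show (x * y)⁻¹ * α (x * y) = (x⁻¹ * α x) * (y⁻¹ * α y)
    rw [mul_inv_rev, map_mul]
    have hc : y⁻¹ * (x⁻¹ * α x) = (x⁻¹ * α x) * y⁻¹ :=
      Subgroup.mem_center_iff.1 (h x) y⁻¹
    calc y⁻¹ * x⁻¹ * (α x * α y) = y⁻¹ * ((x⁻¹ * α x) * α y) := by simp only [mul_assoc]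
    _ = (y⁻¹ * (x⁻¹ * α x)) * α y := (mul_assoc _ _ _).symm
    _ = ((x⁻¹ * α x) * y⁻¹) * α y := by rw [hc]
    _ = (x⁻¹ * α x) * (y⁻¹ * α y) := by simp only [mul_assoc])

lemma iaHom_apply (α : MulAut G) (h) (x : G) : iaHom α h x = x⁻¹ * α x := rfl

lemma apply_eq_mul_iaHom (α : MulAut G) (h) (x : G) : α x = x * iaHom α h x := by
  rw [iaHom_apply, mul_inv_cancel_left]

/-- a central automorphism fixes the derived subgroup pointwise. -/
lemma fix_commutator_of_central (α : MulAut G) (h : α ∈ autCentMod (Subgroup.center G)) :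
    ∀ g ∈ commutator G, α g = g := by
  have h' : ∀ x : G, x⁻¹ * α x ∈ Subgroup.center G := h
  have hker : commutator G ≤ (iaHom α h').ker := by
    rw [commutator_def, Subgroup.commutator_def]
    refine (Subgroup.closure_le _).2 ?_
    rintro w ⟨a, -, b, -, rfl⟩
    have : iaHom α h' ⁅a, b⁆ = ⁅iaHom α h' a, iaHom α h' b⁆ := map_commutatorElement _ _ _
    rw [SetLike.mem_coe, MonoidHom.mem_ker, this, commutatorElement_eq_one_iff_commute]
    exact (Subgroup.mem_center_iff.1 (h' a) (iaHom α h' b)).symm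
  intro g hg
  rw [apply_eq_mul_iaHom α h' g, MonoidHom.mem_ker.1 (hker hg), mul_one]

end aux

/-- Corollary 2.6: for a finite non-abelian `p`-group `G`,
`IA(G)* = Aut_c(G)` iff `G' = Z(G)`. -/
theorem IAstar_eq_autc_iff {p : ℕ} (hp : p.Prime) {G : Type*} [Group G] [Fintype G]
    (hG : IsPGroup p G) (hna : ¬ ∀ x y : G, x * y = y * x) :
    autCentMod (commutator G) ⊓ autFix (Subgroup.center G) =
        autCentMod (Subgroup.center G) ↔
      commutator G = Subgroup.center G := by
  constructor
  · -- hard direction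
    intro hEq
    -- Part 1 : G' ≤ Z(G)
    have hle : commutator G ≤ Subgroup.center G := by
      have hconj : ∀ g : G, (MulAut.conj g : MulAut G) ∈ autCentMod (Subgroup.center G) := by
        intro g
        rw [← hEq]
        refine Subgroup.mem_inf.2 ⟨?_, ?_⟩
        · intro x
          show x⁻¹ * (MulAut.conj g) x ∈ commutator G
          have hx : x⁻¹ * (MulAut.conj g) x = ⁅x⁻¹, g⁆ := by
            simp [MulAut.conj_apply, commutatorElement_def, mul_assoc]
          rw [hx, commutator_def]
          exact Subgroup.commutator_mem_commutator (Subgroup.mem_top _) (Subgroup.mem_top _)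
        · intro y hy
          show g * y * g⁻¹ = y
          rw [Subgroup.mem_center_iff.1 hy g, mul_inv_cancel_right]
      rw [commutator_def, Subgroup.commutator_def]
      refine (Subgroup.closure_le _).2 ?_
      rintro w ⟨a, -, b, -, rfl⟩
      have h := hconj b a⁻¹
      have hx : a⁻¹⁻¹ * (MulAut.conj b) a⁻¹ = ⁅a, b⁆ := by
        simp [MulAut.conj_apply, commutatorElement_def, mul_assoc]
      rw [hx] at h
      exact h
    -- Part 2 : Z(G) ≤ G'
    refine le_antisymm hle (fun z hzZ => ?_)
    by_contra hzG'
    exfalso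
    have hfact : Fact p.Prime := ⟨hp⟩
    -- abelianization set-up
    set A := Abelianization G with hA
    have hπsurj : Function.Surjective (fun g : G => (Abelianization.of g : A)) := fun b => by
      obtain ⟨g, hg⟩ := Quotient.exists_rep b
      exact ⟨g, hg⟩
    have hker : ∀ x : G, Abelianization.of x = 1 ↔ x ∈ commutator G := fun x =>
      QuotientGroup.eq_one_iff x
    set zb : A := Abelianization.of z with hzb_def
    have hzb : zb ≠ 1 := fun hcon => hzG' ((hker z).1 hcon)
    have hz1 : z ≠ 1 := fun hcon => hzG' (hcon ▸ (commutator G).one_mem)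
    -- order of z
    obtain ⟨s, hs⟩ := IsPGroup.iff_orderOf.1 hG z
    have hs1 : 1 ≤ s := by
      by_contra h
      have h0 : s = 0 := by omega
      rw [h0, pow_zero] at hs
      exact hz1 (orderOf_eq_one_iff.1 hs)
    have hzps : z ^ (p ^ s) = 1 := by rw [← hs]; exact pow_orderOf_eq_one z
    have hps_ne : (p : ℕ) ^ s ≠ 0 := pow_ne_zero _ hp.pos.ne'
    -- exponent of A
    have hpA : IsPGroup p A := by
      intro a
      obtain ⟨g, rfl⟩ := hπsurj a
      obtain ⟨k, hk⟩ := hG g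
      exact ⟨k, by rw [← map_pow, hk, map_one]⟩
    haveI : Fintype A := Fintype.ofFinite A
    obtain ⟨n, hn⟩ := IsPGroup.iff_card.1 hpA
    have hdvd_card : Monoid.exponent A ∣ p ^ n := by
      rw [← hn, Nat.card_eq_fintype_card]
      exact Group.exponent_dvd_card
    obtain ⟨e, he_le, hexpA⟩ := (Nat.dvd_prime_pow hp).1 hdvd_card
    haveI : Nontrivial A := ⟨zb, 1, hzb⟩
    have he1 : 1 ≤ e := by
      by_contra h
      have h0 : e = 0 := by omega
      rw [h0, pow_zero] at hexpA
      have := Monoid.one_lt_exponent (G := A)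
      omega
    -- the contradiction machine
    have blow : ∀ (f : G →* G), (∀ x, ∃ j : ℤ, f x = z ^ j) → ∀ (T : ℕ), f z = z ^ T →
        Nat.Coprime (orderOf z) (1 + T) → ((∃ g, f g ∉ commutator G) ∨ f z ≠ 1) → False := by
      intro f hrange T hfz hcop hviol
      obtain ⟨α, hα⟩ := construct_mulAut z hzZ f hrange T hfz hcop
      have hmem : α ∈ autCentMod (Subgroup.center G) := by
        intro x
        rw [hα x]
        obtain ⟨j, hj⟩ := hrange x
        rw [hj]
        exact Subgroup.zpow_mem _ hzZ j
      rw [← hEq] at hmem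
      obtain ⟨h1, h2⟩ := Subgroup.mem_inf.1 hmem
      rcases hviol with ⟨g, hg⟩ | hfz1
      · exact hg (by rw [← hα g]; exact h1 g)
      · exact hfz1 (by rw [← hα z, h2 z hzZ, inv_mul_cancel])
    rcases le_or_gt s e with hse | hes
    · -- case s ≤ e
      haveI : NeZero (p ^ s) := ⟨hps_ne⟩
      haveI : Fact (1 < p ^ s) := ⟨Nat.one_lt_pow (by omega) hp.one_lt⟩
      obtain ⟨φ, hφsurj⟩ := exists_surjective_char hp hexpA hse hs1
      set ψ : G →* Multiplicative (ZMod (p ^ s)) := φ.comp Abelianization.of with hψ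
      have hψsurj : Function.Surjective ψ := hφsurj.comp hπsurj
      set tz : ZMod (p ^ s) := (ψ z).toAdd with htz
      set t : ℕ := tz.val with ht
      by_cases hdvd1 : p ∣ 1 + t
      · by_cases hp2 : p = 2
        · -- p = 2
          subst hp2
          have htodd : ¬ 2 ∣ t := by omega
          have hordzb : orderOf zb = 2 ^ s := by
            have hd2 : orderOf zb ∣ 2 ^ s := by
              rw [← hs, hzb_def]
              exact orderOf_map_dvd Abelianization.of z
            have hd1 : orderOf (ψ z) ∣ orderOf zb := orderOf_map_dvd φ zb
            have hψzord : orderOf (ψ z) = 2 ^ s := by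
              rw [← ofAdd_toAdd (ψ z), orderOf_ofAdd_eq_addOrderOf]
              have htzc : (ψ z).toAdd = ((t : ℕ) : ZMod (2 ^ s)) := by
                rw [ht, htz, ZMod.natCast_val, ZMod.cast_id]
              rw [htzc, ZMod.addOrderOf_coe _ hps_ne]
              have hcop2 : Nat.Coprime (2 ^ s) t :=
                Nat.Coprime.pow_left _ ((Nat.prime_two.coprime_iff_not_dvd).2 htodd)
              rw [Nat.Coprime] at hcop2
              rw [hcop2, Nat.div_one]
            exact Nat.dvd_antisymm hd2 (hψzord ▸ hd1)
          by_cases hs2 : 2 ≤ s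
          · -- s ≥ 2
            set ψ2 : G →* Multiplicative (ZMod (2 ^ s)) := ψ * ψ with hψ2
            set T : ℕ := (tz + tz).val with hT
            have hfz : ((zmodPowHom z hzps).comp ψ2) z = z ^ T := rfl
            have hnd : ¬ 2 ∣ 1 + T := by
              have hps_dvd : (2:ℕ) ∣ 2 ^ s := dvd_pow_self 2 (by omega)
              have hTt : T = (t + t) % 2 ^ s := by rw [hT, ZMod.val_add, ht]
              have h1 : (t + t) % 2 ^ s % 2 = (t + t) % 2 := (Nat.mod_modEq _ _).of_dvd hps_dvd
              omega
            refine blow _ (fun x => ⟨(((ψ2 x).toAdd.val : ℕ) : ℤ), by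
                rw [MonoidHom.comp_apply, zmodPowHom_apply, zpow_natCast]⟩) T hfz ?_ ?_
            · rw [hs]
              exact Nat.Coprime.pow_left _ (Nat.prime_two.coprime_iff_not_dvd.2 hnd)
            · obtain ⟨g, hg⟩ := hψsurj (Multiplicative.ofAdd 1)
              refine Or.inl ⟨g, ?_⟩
              have h2lt : (2:ℕ) < 2 ^ s := by
                calc (2:ℕ) = 2 ^ 1 := (pow_one 2).symm
                _ < 2 ^ s := Nat.pow_lt_pow_right one_lt_two (by omega)
              have hadd : (ψ2 g).toAdd = ((2 : ℕ) : ZMod (2 ^ s)) := by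
                show (ψ g).toAdd + (ψ g).toAdd = _
                rw [hg, toAdd_ofAdd]
                push_cast
                ring
              have hfg : ((zmodPowHom z hzps).comp ψ2) g = z ^ 2 := by
                rw [MonoidHom.comp_apply, zmodPowHom_apply, hadd, ZMod.val_natCast_of_lt h2lt]
              rw [hfg]
              intro hcon
              have hzb2 : zb ^ 2 = 1 := by
                rw [hzb_def, ← map_pow]
                exact (hker (z ^ 2)).2 hcon
              have := Nat.le_of_dvd two_pos (hordzb ▸ orderOf_dvd_of_pow_eq_one hzb2)
              have h4 : (2:ℕ) ^ 2 ≤ 2 ^ s := Nat.pow_le_pow_right (by omega) hs2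
              omega
          · -- s = 1
            have hseq : s = 1 := by omega
            have hz2 : z ^ 2 = 1 := by
              have := hzps
              rw [hseq, pow_one] at this
              exact this
            haveI : NeZero (2:ℕ) := ⟨two_ne_zero⟩
            set K : Subgroup A := Subgroup.zpowers zb ⊔ (powMonoidHom 2 : A →* A).range
              with hK_def
            by_cases hK : K = ⊤
            · -- A is cyclic, so G is abelian: contradiction
              apply hna
              set Zb := Subgroup.zpowers zb with hZb
              have hCtriv : ∀ c : A ⧸ Zb, c = 1 := by
                have hsq_surj : Function.Surjective (powMonoidHom 2 : A ⧸ Zb →* A ⧸ Zb) := by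
                  intro c
                  obtain ⟨v0, rfl⟩ := QuotientGroup.mk_surjective c
                  have haK : v0 ∈ K := hK ▸ Subgroup.mem_top v0
                  rw [hK_def, Subgroup.mem_sup] at haK
                  obtain ⟨y, hy, w, hw, hyw⟩ := haK
                  obtain ⟨v, rfl⟩ := hw
                  refine ⟨QuotientGroup.mk v, ?_⟩
                  show ((QuotientGroup.mk' Zb) v) ^ 2 = (QuotientGroup.mk' Zb) v0
                  rw [← map_pow]
                  have hy1 : (QuotientGroup.mk' Zb) y = 1 := (QuotientGroup.eq_one_iff y).2 hy
                  rw [← hyw, map_mul, hy1, one_mul]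
                  rfl
                have hsq_inj : Function.Injective (powMonoidHom 2 : A ⧸ Zb →* A ⧸ Zb) :=
                  Finite.injective_iff_surjective.2 hsq_surj
                intro c
                by_contra hc
                have hpC : IsPGroup 2 (A ⧸ Zb) := hpA.to_quotient Zb
                obtain ⟨k, hk⟩ := IsPGroup.iff_orderOf.1 hpC c
                have hk1 : k ≠ 0 := by
                  intro h0
                  rw [h0, pow_zero] at hk
                  exact hc (orderOf_eq_one_iff.1 hk)
                set c' := c ^ (2 ^ (k - 1)) with hc'
                have hc'ne : c' ≠ 1 := by
                  intro hcon
                  have h5' : (2:ℕ) ^ k ∣ 2 ^ (k - 1) := hk ▸ orderOf_dvd_of_pow_eq_one hcon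
                  have h5 := Nat.le_of_dvd (pow_pos two_pos _) h5'
                  have h6 : (2:ℕ) ^ (k - 1) < 2 ^ k :=
                    Nat.pow_lt_pow_right one_lt_two (by omega)
                  omega
                apply hc'ne
                have hc'sq : c' ^ 2 = 1 := by
                  rw [hc', ← pow_mul, ← pow_succ, Nat.sub_add_cancel (by omega), ← hk]
                  exact pow_orderOf_eq_one c
                have h7 : (powMonoidHom 2 : A ⧸ Zb →* A ⧸ Zb) c'
                    = (powMonoidHom 2 : A ⧸ Zb →* A ⧸ Zb) 1 := by
                  rw [powMonoidHom_apply, powMonoidHom_apply, hc'sq, one_pow]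
                exact hsq_inj h7
              haveI : IsCyclic A :=
                ⟨⟨zb, fun a => (QuotientGroup.eq_one_iff a).1 (hCtriv (QuotientGroup.mk a))⟩⟩
              exact fun x y => commutative_of_cyclic_center_quotient Abelianization.of
                (fun w hw => hle ((hker w).1 (MonoidHom.mem_ker.mp hw))) x y
            · -- K ≠ ⊤ : build a character killing z but not everything
              obtain ⟨a, ha⟩ : ∃ a : A, a ∉ K := by
                by_contra hcon
                push_neg at hcon
                exact hK ((Subgroup.eq_top_iff' K).2 hcon)
              have hexpB : Monoid.exponent (A ⧸ K) ∣ 2 := by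
                refine Monoid.exponent_dvd_of_forall_pow_eq_one (fun b => ?_)
                obtain ⟨a', rfl⟩ := QuotientGroup.mk_surjective b
                have hmem : a' ^ 2 ∈ K := Subgroup.mem_sup_right ⟨a', rfl⟩
                show ((QuotientGroup.mk' K) a') ^ 2 = 1
                rw [← map_pow]
                exact (QuotientGroup.eq_one_iff _).2 hmem
              have hab1 : (QuotientGroup.mk a : A ⧸ K) ≠ 1 := fun hcon =>
                ha ((QuotientGroup.eq_one_iff a).1 hcon)
              obtain ⟨χ, hχ⟩ := exists_char_ne_one (A := A ⧸ K) (n := 2) hexpB two_ne_zero hab1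
              set f : G →* G := (zmodPowHom z hz2).comp
                (χ.comp ((QuotientGroup.mk' K).comp Abelianization.of)) with hf
              have hfz0 : f z = z ^ 0 := by
                rw [hf]
                simp only [MonoidHom.comp_apply]
                rw [zmodPowHom_apply]
                have hzbK : (QuotientGroup.mk' K) (Abelianization.of z) = 1 :=
                  (QuotientGroup.eq_one_iff _).2 (Subgroup.mem_sup_left (Subgroup.mem_zpowers zb))
                rw [hzbK, map_one, toAdd_one, ZMod.val_zero]
              refine blow f (fun x => ⟨(((χ ((QuotientGroup.mk' K) (Abelianization.of x))).toAdd.val : ℕ) : ℤ), by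
                  rw [hf, MonoidHom.comp_apply, zmodPowHom_apply, zpow_natCast]
                  rfl⟩) 0 hfz0 (Nat.coprime_one_right _) ?_
              obtain ⟨g, hg⟩ := hπsurj a
              refine Or.inl ⟨g, ?_⟩
              have hval : (χ ((QuotientGroup.mk' K) (Abelianization.of g))).toAdd.val = 1 := by
                have hmk : (QuotientGroup.mk' K) (Abelianization.of g) = QuotientGroup.mk a := by
                  rw [show Abelianization.of g = a from hg]
                  rfl
                rw [hmk]
                have hne : (χ (QuotientGroup.mk a : A ⧸ K)).toAdd ≠ 0 := fun hcon => hχ (by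
                  apply Multiplicative.toAdd.injective
                  rw [toAdd_one]
                  exact hcon)
                have hvlt : (χ (QuotientGroup.mk a : A ⧸ K)).toAdd.val < 2 := ZMod.val_lt _
                have hvne : (χ (QuotientGroup.mk a : A ⧸ K)).toAdd.val ≠ 0 := fun hcon =>
                  hne ((ZMod.val_eq_zero _).1 hcon)
                omega
              have hfg : f g = z := by
                rw [hf]
                simp only [MonoidHom.comp_apply]
                rw [zmodPowHom_apply, hval, pow_one]
              rw [hfg]
              exact hzG'
        · -- p odd
          set ψ2 : G →* Multiplicative (ZMod (p ^ s)) := ψ * ψ with hψ2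
          set T : ℕ := (tz + tz).val with hT
          have hfz : ((zmodPowHom z hzps).comp ψ2) z = z ^ T := rfl
          have hnd : ¬ p ∣ 1 + T := by
            intro hcon
            have hps_dvd : (p:ℕ) ∣ p ^ s := dvd_pow_self p (by omega)
            have hTt : T = (t + t) % p ^ s := by rw [hT, ZMod.val_add, ht]
            have h2 : (1 + T) ≡ 1 + (t + t) [MOD p] := by
              rw [hTt]
              exact ((Nat.mod_modEq _ _).of_dvd hps_dvd).add_left 1
            have h3 : p ∣ 1 + (t + t) :=
              (Nat.modEq_zero_iff_dvd).1 (h2.symm.trans ((Nat.modEq_zero_iff_dvd).2 hcon))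
            have h5 : p ∣ (1 + t) + (1 + t) := Dvd.dvd.add hdvd1 hdvd1
            have h6 : (1 + t) + (1 + t) = (1 + (t + t)) + 1 := by ring
            rw [h6] at h5
            have := Nat.le_of_dvd one_pos ((Nat.dvd_add_right h3).1 h5)
            have := hp.two_le
            omega
          refine blow _ (fun x => ⟨(((ψ2 x).toAdd.val : ℕ) : ℤ), by
              rw [MonoidHom.comp_apply, zmodPowHom_apply, zpow_natCast]⟩) T hfz ?_ ?_
          · rw [hs]
            exact Nat.Coprime.pow_left _ (hp.coprime_iff_not_dvd.2 hnd)
          · have hunit : IsUnit (2 : ZMod (p ^ s)) := by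
              have h2p : Nat.Coprime 2 (p ^ s) :=
                Nat.Coprime.pow_right _ ((Nat.coprime_primes Nat.prime_two hp).2 (Ne.symm hp2))
              have := (ZMod.isUnit_iff_coprime 2 (p ^ s)).2 h2p
              simpa using this
            obtain ⟨g, hg⟩ := hψsurj (Multiplicative.ofAdd ((2 : ZMod (p ^ s))⁻¹))
            refine Or.inl ⟨g, ?_⟩
            have hadd : (ψ2 g).toAdd = 1 := by
              show (ψ g).toAdd + (ψ g).toAdd = 1
              rw [hg, toAdd_ofAdd, ← two_mul]
              exact ZMod.mul_inv_of_unit _ hunit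
            have : ((zmodPowHom z hzps).comp ψ2) g = z := by
              rw [MonoidHom.comp_apply, zmodPowHom_apply, hadd, ZMod.val_one, pow_one]
            rw [this]
            exact hzG'
      · -- p ∤ 1 + t : direct
        refine blow ((zmodPowHom z hzps).comp ψ) (fun x => ⟨((ψ x).toAdd.val : ℤ), by
            rw [MonoidHom.comp_apply, zmodPowHom_apply, zpow_natCast]⟩) t rfl ?_ ?_
        · rw [hs]
          exact Nat.Coprime.pow_left _ (hp.coprime_iff_not_dvd.2 hdvd1)
        · obtain ⟨g, hg⟩ := hψsurj (Multiplicative.ofAdd 1)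
          refine Or.inl ⟨g, ?_⟩
          have : (zmodPowHom z hzps).comp ψ g = z := by
            rw [MonoidHom.comp_apply, hg, zmodPowHom_apply, toAdd_ofAdd, ZMod.val_one, pow_one]
          rw [this]
          exact hzG'
    · -- case e < s
      have hpe_ne : (p:ℕ) ^ e ≠ 0 := pow_ne_zero _ hp.pos.ne'
      haveI : NeZero (p ^ e) := ⟨hpe_ne⟩
      set z' : G := z ^ (p ^ (s - e)) with hz'
      have hz'pow : z' ^ (p ^ e) = 1 := by
        rw [hz', ← pow_mul, ← pow_add, Nat.sub_add_cancel (le_of_lt hes)]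
        exact hzps
      obtain ⟨φ, hφ⟩ := exists_char_ne_one (A := A) (n := p ^ e) (by rw [hexpA]) hpe_ne hzb
      set t1 : ℕ := (φ zb).toAdd.val with ht1
      have ht1_ne : t1 ≠ 0 := by
        intro hcon
        refine hφ ?_
        apply Multiplicative.toAdd.injective
        rw [toAdd_one]
        exact (ZMod.val_eq_zero _).1 hcon
      have ht1_lt : t1 < p ^ e := ZMod.val_lt _
      set T : ℕ := p ^ (s - e) * t1 with hT
      have hfz : ((zmodPowHom z' hz'pow).comp (φ.comp Abelianization.of)) z = z ^ T := by
        rw [MonoidHom.comp_apply, MonoidHom.comp_apply, zmodPowHom_apply, hT, pow_mul]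
      refine blow _ (fun x => ⟨((p ^ (s - e) * ((φ (Abelianization.of x)).toAdd.val) : ℕ) : ℤ), by
          rw [MonoidHom.comp_apply, MonoidHom.comp_apply, zmodPowHom_apply, zpow_natCast,
            pow_mul]⟩) T hfz ?_ ?_
      · rw [hs]
        refine Nat.Coprime.pow_left _ (hp.coprime_iff_not_dvd.2 ?_)
        intro hcon
        have hpT : (p : ℕ) ∣ T := by
          rw [hT]
          exact Dvd.dvd.mul_right (dvd_pow_self p (by omega)) _
        rw [Nat.add_comm] at hcon
        have := Nat.le_of_dvd one_pos ((Nat.dvd_add_right hpT).1 hcon)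
        have := hp.two_le
        omega
      · refine Or.inr ?_
        rw [hfz]
        intro hcon
        have hdv := orderOf_dvd_of_pow_eq_one hcon
        rw [hs] at hdv
        have hT_pos : 0 < T := Nat.mul_pos (pow_pos hp.pos _) (Nat.pos_of_ne_zero ht1_ne)
        have hT_lt : T < p ^ s := by
          calc T < p ^ (s - e) * p ^ e := by
                rw [hT]
                exact (Nat.mul_lt_mul_left (pow_pos hp.pos _)).2 ht1_lt
          _ = p ^ s := by rw [← pow_add, Nat.sub_add_cancel (le_of_lt hes)]
        exact absurd (Nat.le_of_dvd hT_pos hdv) (not_le.2 hT_lt)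
  · -- easy direction
    intro hG'
    refine le_antisymm (fun α hα => ?_) (fun α hα => ?_)
    · have h1 := (Subgroup.mem_inf.1 hα).1
      intro x
      rw [← hG']
      exact h1 x
    · refine Subgroup.mem_inf.2 ⟨?_, ?_⟩
      · intro x
        rw [hG']
        exact hα x
      · intro y hy
        exact fix_commutator_of_central α hα y (by rw [hG']; exact hy)
end
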